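/- Let W be the subgroup of ⋀²(ℤ⁵) spanned by the seven elements e₁∧e₂, e₁∧e₃, e₁∧e₄, e₁∧e₅, e₂∧e₃, e₂∧e₄, e₂∧e₅. Then for every integer k and all x, y ∈ W, x∧y∧(k·e₁) = 0 in ⋀⁵(ℤ⁵). -/

import Mathlib

open ExteriorAlgebra

/-- The image in the exterior algebra of the `i`-th standard basis vector of `ℤⁿ`. -/
noncomputable def e {n : ℕ} (i : Fin n) : ExteriorAlgebra ℤ (Fin n → ℤ) :=
  ι ℤ (Pi.single i 1)

private lemma eswap {n : ℕ} (i j : Fin n) : e i * e j = -(e j * e i) := by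
  exact eq_neg_of_add_eq_zero_left (ι_add_mul_swap _ _)

private lemma esq {n : ℕ} (i : Fin n) : e i * e i = 0 := ι_sq_zero _

private lemma s1 {n : ℕ} (a b : Fin n) : e a * e b * e a = 0 := by
  rw [eswap a b]; rw [neg_mul, mul_assoc, esq, mul_zero, neg_zero]

private lemma s2 {n : ℕ} (a b c : Fin n) : e a * e b * e c * e a = 0 := by
  rw [mul_assoc (e a * e b), eswap c a, mul_neg, ← mul_assoc, s1, zero_mul, neg_zero]

private lemma s3 {n : ℕ} (a b c d : Fin n) : e a * e b * e c * e d * e a = 0 := by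
  rw [mul_assoc (e a * e b * e c), eswap d a, mul_neg, ← mul_assoc, s2, zero_mul, neg_zero]

private lemma k1 (a b d : Fin 5) : e a * e b * (e a * e d) * e 0 = 0 := by
  have : e a * e b * (e a * e d) = 0 := by
    rw [← mul_assoc, s1, zero_mul]
  rw [this, zero_mul]

private lemma k2 (b c d : Fin 5) : e 0 * e b * (e c * e d) * e 0 = 0 := by
  have := s3 (0 : Fin 5) b c d
  rw [← mul_assoc] at *
  exact this

private lemma k3 (a b d : Fin 5) : e a * e b * (e 0 * e d) * e 0 = 0 := by
  have h : e 0 * e d * e 0 = 0 := s1 0 d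
  rw [mul_assoc (e a * e b), mul_assoc, h, mul_zero, mul_zero]

/-- The rank-7 subgroup of `⋀²(ℤ⁵)` spanned by
`e₁∧e₂, e₁∧e₃, e₁∧e₄, e₁∧e₅, e₂∧e₃, e₂∧e₄, e₂∧e₅` is totally isotropic for
every `ω = k·e₁ ∈ ⋀¹(ℤ⁵)`. -/
theorem rank_seven_isotropic_Z5 :
    ∀ x ∈ Submodule.span ℤ ({e 0 * e 1, e 0 * e 2, e 0 * e 3, e 0 * e 4,
        e 1 * e 2, e 1 * e 3, e 1 * e 4} : Set (ExteriorAlgebra ℤ (Fin 5 → ℤ))),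
    ∀ y ∈ Submodule.span ℤ ({e 0 * e 1, e 0 * e 2, e 0 * e 3, e 0 * e 4,
        e 1 * e 2, e 1 * e 3, e 1 * e 4} : Set (ExteriorAlgebra ℤ (Fin 5 → ℤ))),
    ∀ k : ℤ, x * y * (k • e 0) = 0 := by
  intro x hx y hy k
  rw [mul_smul_comm]
  suffices h : x * y * e 0 = 0 by rw [h, smul_zero]
  induction hx using Submodule.span_induction with
  | zero => simp
  | add a b _ _ ha hb => rw [add_mul, add_mul, ha, hb, add_zero]
  | smul c a _ ha => rw [smul_mul_assoc, smul_mul_assoc, ha, smul_zero]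
  | mem g hg =>
    induction hy using Submodule.span_induction with
    | zero => simp
    | add a b _ _ ha hb => rw [mul_add, add_mul, ha, hb, add_zero]
    | smul c a _ ha => rw [mul_smul_comm, smul_mul_assoc, ha, smul_zero]
    | mem h hh =>
      simp only [Set.mem_insert_iff, Set.mem_singleton_iff] at hg hh
      rcases hg with rfl | rfl | rfl | rfl | rfl | rfl | rfl <;>
        rcases hh with rfl | rfl | rfl | rfl | rfl | rfl | rfl <;>
        first
          | with_reducible exact k3 _ _ _
          | with_reducible exact k1 _ _ _
          | with_reducible exact k2 _ _ _
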